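/- Suppose the conductance values satisfy g{i,j} ≥ 0 for every edge of G, the potential function φ satisfies the boundary conditions φ(vIN) = N − 1 and φ(vOUT) = 0, φ satisfies the Kirchhoff equation at every vertex i ∉ {vIN, vOUT}, and the penalties vanish: O(vOUT) = 0, O(i) = 1 for every vertex i ≠ vOUT, and B(i) = 0 for every vertex i. Then the absolute current support is exactly the edge set of a Hamiltonian path in G from vIN to vOUT. -/

import Mathlib

open Finset SimpleGraph

/-- If the conductances are nonnegative, the potential satisfies the boundary
conditions and the Kirchhoff equations at all non-terminal vertices, and the out-flow and
branching penalties vanish, then the absolute current support is exactly the edge set of a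
Hamiltonian path in `G` from `vIN` to `vOUT`. -/
theorem zero_penalty_structure
    {V : Type*} [Fintype V] [DecidableEq V]
    (G : SimpleGraph V) [DecidableRel G.Adj]
    (N : ℕ) (hNcard : N = Fintype.card V) (hN3 : 3 ≤ N)
    (vIN vOUT : V) (hne : vIN ≠ vOUT)
    (hdegIN : G.degree vIN = 1) (hdegOUT : G.degree vOUT = 1)
    -- conductance configuration, nonnegative on every edge
    (g : Sym2 V → ℝ) (hg : ∀ e ∈ G.edgeSet, 0 ≤ g e)
    -- potential with the boundary conditions
    (φ : V → ℝ) (hφIN : φ vIN = (N : ℝ) - 1) (hφOUT : φ vOUT = 0)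
    -- directed currents via Ohm's law
    (J : V → V → ℝ) (hJ : ∀ i j, J i j = g s(i, j) * (φ i - φ j))
    -- Kirchhoff equation at every non-terminal vertex
    (hKirchhoff : ∀ i, i ≠ vIN → i ≠ vOUT → ∑ j ∈ G.neighborFinset i, J i j = 0)
    -- out-flow
    (O : V → ℝ) (hO : ∀ i, O i = ∑ j ∈ G.neighborFinset i, max (J i j) 0)
    -- local branching penalty (sum over unordered pairs of distinct neighbors)
    (B : V → ℝ)
    (hB : ∀ i, B i =
      (1 / 2) * ∑ p ∈ (G.neighborFinset i).offDiag, max (J i p.1) 0 * max (J i p.2) 0)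
    -- vanishing of the penalties
    (hOout : O vOUT = 0) (hOone : ∀ i, i ≠ vOUT → O i = 1)
    (hBzero : ∀ i, B i = 0) :
    ∃ p : G.Walk vIN vOUT, p.IsHamiltonian ∧
      ∀ i j, G.Adj i j → (J i j ≠ 0 ↔ s(i, j) ∈ p.edges) := by
  classical
  -- antisymmetry of the current
  have hanti : ∀ i j : V, J j i = - J i j := by
    intro i j
    rw [hJ j i, hJ i j, Sym2.eq_swap]
    ring
  -- at each vertex, no two distinct positive out-currents
  have hBpos : ∀ i : V, ∀ k ∈ G.neighborFinset i, ∀ l ∈ G.neighborFinset i,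
      k ≠ l → 0 < J i k → 0 < J i l → False := by
    intro i k hk l hl hkl hpk hpl
    have hsum : ∑ p ∈ (G.neighborFinset i).offDiag, max (J i p.1) 0 * max (J i p.2) 0 = 0 := by
      have h0 := hBzero i
      rw [hB i] at h0
      linarith
    have hterm := (Finset.sum_eq_zero_iff_of_nonneg
        (fun p _ => mul_nonneg (le_max_right _ _) (le_max_right _ _))).1 hsum (k, l)
        (Finset.mem_offDiag.2 ⟨hk, hl, hkl⟩)
    simp only [max_eq_left hpk.le, max_eq_left hpl.le] at hterm
    nlinarith
  -- unique out-neighbor with unit current, for each `i ≠ vOUT`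
  have hnext : ∀ i : V, i ≠ vOUT → ∃ j, G.Adj i j ∧ J i j = 1 ∧
      ∀ k, G.Adj i k → 0 < J i k → k = j := by
    intro i hi
    have hOP : O i = ∑ j ∈ (G.neighborFinset i).filter (fun j => 0 < J i j), J i j := by
      rw [hO i, Finset.sum_filter]
      refine Finset.sum_congr rfl fun j _ => ?_
      split_ifs with h
      · exact max_eq_left h.le
      · exact max_eq_right (not_lt.1 h)
    have h1 : ∑ j ∈ (G.neighborFinset i).filter (fun j => 0 < J i j), J i j = 1 := by
      rw [← hOP]; exact hOone i hi
    have hPne : ((G.neighborFinset i).filter (fun j => 0 < J i j)).Nonempty := by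
      rcases Finset.eq_empty_or_nonempty ((G.neighborFinset i).filter (fun j => 0 < J i j)) with h | h
      · rw [h] at h1; simp at h1
      · exact h
    obtain ⟨j, hj⟩ := hPne
    have hjmem := Finset.mem_filter.1 hj
    have hjadj : G.Adj i j := (G.mem_neighborFinset _ _).1 hjmem.1
    have huniq : ∀ k, G.Adj i k → 0 < J i k → k = j := by
      intro k hk hpk
      by_contra hne'
      exact hBpos i k ((G.mem_neighborFinset _ _).2 hk) j hjmem.1 hne' hpk hjmem.2
    have hPj : (G.neighborFinset i).filter (fun j => 0 < J i j) = {j} := by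
      apply Finset.eq_singleton_iff_unique_mem.2
      refine ⟨hj, fun k hk => ?_⟩
      have hkmem := Finset.mem_filter.1 hk
      exact huniq k ((G.mem_neighborFinset _ _).1 hkmem.1) hkmem.2
    rw [hPj, Finset.sum_singleton] at h1
    exact ⟨j, hjadj, h1, huniq⟩
  choose! nxt hnxt_adj hnxt_one hnxt_uniq using hnext
  -- no positive out-current at vOUT
  have hout0 : ∀ j, G.Adj vOUT j → J vOUT j ≤ 0 := by
    intro j hj
    by_contra h
    push_neg at h
    have hz : ∀ k ∈ G.neighborFinset vOUT, max (J vOUT k) 0 = 0 :=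
      (Finset.sum_eq_zero_iff_of_nonneg fun k _ => le_max_right _ _).1
        (by rw [← hO vOUT]; exact hOout)
    have := hz j ((G.mem_neighborFinset _ _).2 hj)
    rw [max_eq_left h.le] at this
    linarith
  -- current flows along decreasing potential
  have hφdec : ∀ i j, G.Adj i j → 0 < J i j → φ j < φ i := by
    intro i j hadj hpos
    have hge : 0 ≤ g s(i, j) := hg _ (G.mem_edgeSet.2 hadj)
    rw [hJ] at hpos
    by_contra hcon
    push_neg at hcon
    have : g s(i, j) * (φ i - φ j) ≤ 0 :=
      mul_nonpos_of_nonneg_of_nonpos hge (by linarith)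
    linarith
  -- in-flow
  set inflow : V → ℝ := fun i => ∑ j ∈ G.neighborFinset i, max (J j i) 0 with hinflowdef
  -- in-flow at non-terminal vertices equals 1
  have hin_eq : ∀ i, i ≠ vIN → i ≠ vOUT → inflow i = 1 := by
    intro i h1 h2
    have hk := hKirchhoff i h1 h2
    have heq : inflow i = O i - ∑ j ∈ G.neighborFinset i, J i j := by
      rw [hO i, hinflowdef, ← Finset.sum_sub_distrib]
      refine Finset.sum_congr rfl fun j _ => ?_
      rw [hanti i j]
      rcases le_total (J i j) 0 with h | h
      · rw [max_eq_left (by linarith : (0:ℝ) ≤ -J i j), max_eq_right h]; ring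
      · rw [max_eq_right (by linarith : -J i j ≤ 0), max_eq_left h]; ring
    rw [heq, hk, hOone i h2]; ring
  -- in-flow at vIN is 0
  have hin_vIN : inflow vIN = 0 := by
    obtain ⟨n, hn⟩ := Finset.card_eq_one.1
      (by rw [G.card_neighborFinset_eq_degree, hdegIN])
    have hOIN := hOone vIN hne
    rw [hO vIN, hn, Finset.sum_singleton] at hOIN
    have hJn : J vIN n = 1 := by
      rcases le_total (J vIN n) 0 with h | h
      · rw [max_eq_right h] at hOIN; linarith
      · rw [max_eq_left h] at hOIN; exact hOIN
    have : J n vIN = -1 := by rw [hanti vIN n, hJn]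
    rw [hinflowdef]
    simp only [hn, Finset.sum_singleton, this]
    norm_num
  -- total out-flow equals total in-flow
  have hswap : ∑ i, O i = ∑ i, inflow i := by
    have hrw : ∀ (F : V → V → ℝ), ∑ i, ∑ j ∈ G.neighborFinset i, F i j
        = ∑ i, ∑ j, if G.Adj i j then F i j else 0 := by
      intro F
      refine Finset.sum_congr rfl fun i _ => ?_
      rw [neighborFinset_eq_filter, Finset.sum_filter]
    simp only [hinflowdef, hO]
    rw [hrw (fun i j => max (J i j) 0), hrw (fun i j => max (J j i) 0), Finset.sum_comm]
    refine Finset.sum_congr rfl fun i _ => Finset.sum_congr rfl fun j _ => ?_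
    by_cases h : G.Adj i j
    · simp [h, h.symm]
    · rw [if_neg h, if_neg (fun hc : G.Adj j i => h hc.symm)]
  -- total out-flow is N - 1
  have hsumO : ∑ i, O i = (N : ℝ) - 1 := by
    rw [← Finset.add_sum_erase _ O (Finset.mem_univ vOUT), hOout, zero_add,
      Finset.sum_congr rfl (fun i hi => hOone i (Finset.ne_of_mem_erase hi)),
      Finset.sum_const, Finset.card_erase_of_mem (Finset.mem_univ _), Finset.card_univ,
      ← hNcard, nsmul_eq_mul, mul_one, Nat.cast_sub (by omega), Nat.cast_one]
  -- hence in-flow at vOUT is 1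
  have hin_vOUT : inflow vOUT = 1 := by
    have hmemIN : vIN ∈ (Finset.univ.erase vOUT) := Finset.mem_erase.2 ⟨hne, Finset.mem_univ _⟩
    have hrest : ∑ i ∈ (Finset.univ.erase vOUT).erase vIN, inflow i = (N : ℝ) - 2 := by
      rw [Finset.sum_congr rfl (fun i hi => hin_eq i (Finset.ne_of_mem_erase hi)
        (Finset.ne_of_mem_erase (Finset.mem_of_mem_erase hi))), Finset.sum_const,
        nsmul_eq_mul, mul_one, Finset.card_erase_of_mem hmemIN,
        Finset.card_erase_of_mem (Finset.mem_univ _), Finset.card_univ, ← hNcard,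
        Nat.cast_sub (by omega : 1 ≤ N - 1), Nat.cast_sub (by omega : 1 ≤ N), Nat.cast_one]
      ring
    have hsumIn : ∑ i, inflow i = inflow vOUT + (inflow vIN + ((N : ℝ) - 2)) := by
      rw [← Finset.add_sum_erase _ inflow (Finset.mem_univ vOUT),
        ← Finset.add_sum_erase _ inflow hmemIN, hrest]
    rw [hswap, hsumIn, hin_vIN] at hsumO
    linarith
  -- every positive in-current has value 1
  have hpos_in : ∀ i a, G.Adj a i → 0 < J a i → J a i = 1 := by
    intro i a ha hp
    have haOUT : a ≠ vOUT := by
      rintro rfl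
      exact absurd hp (not_lt.2 (hout0 i ha))
    have := hnxt_uniq a haOUT i ha hp
    rw [this] at hp ⊢
    exact hnxt_one a haOUT
  -- in-flow counts predecessors
  have hQcard : ∀ i : V, ((((G.neighborFinset i).filter (fun j => 0 < J j i)).card : ℝ))
      = inflow i := by
    intro i
    have h1 : inflow i = ∑ j ∈ (G.neighborFinset i).filter (fun j => 0 < J j i), J j i := by
      rw [hinflowdef, Finset.sum_filter]
      refine Finset.sum_congr rfl fun j _ => ?_
      split_ifs with h
      · exact max_eq_left h.le
      · exact max_eq_right (not_lt.1 h)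
    rw [h1, Finset.sum_congr rfl (fun j hj => hpos_in i j
      ((G.mem_neighborFinset _ _).1 (Finset.mem_filter.1 hj).1).symm (Finset.mem_filter.1 hj).2),
      Finset.sum_const, nsmul_eq_mul, mul_one]
  -- at most one predecessor at every vertex
  have hQle : ∀ i : V, ((G.neighborFinset i).filter (fun j => 0 < J j i)).card ≤ 1 := by
    intro i
    have hle : inflow i ≤ 1 := by
      by_cases h1 : i = vIN
      · rw [h1, hin_vIN]; norm_num
      · by_cases h2 : i = vOUT
        · rw [h2, hin_vOUT]
        · rw [hin_eq i h1 h2]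
    have := hQcard i
    have : (((((G.neighborFinset i).filter (fun j => 0 < J j i)).card : ℝ))) ≤ 1 := by
      rw [this]; exact hle
    exact_mod_cast this
  have huniq_pred : ∀ i a b : V, G.Adj a i → G.Adj b i → 0 < J a i → 0 < J b i → a = b := by
    intro i a b ha hb hpa hpb
    have hA : a ∈ (G.neighborFinset i).filter (fun j => 0 < J j i) :=
      Finset.mem_filter.2 ⟨(G.mem_neighborFinset _ _).2 ha.symm, hpa⟩
    have hB' : b ∈ (G.neighborFinset i).filter (fun j => 0 < J j i) :=
      Finset.mem_filter.2 ⟨(G.mem_neighborFinset _ _).2 hb.symm, hpb⟩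
    exact Finset.card_le_one.1 (hQle i) a hA b hB'
  -- vIN has no predecessor
  have hno_pred_vIN : ∀ a, G.Adj a vIN → J a vIN ≤ 0 := by
    intro a ha
    by_contra h
    push_neg at h
    have hA : a ∈ (G.neighborFinset vIN).filter (fun j => 0 < J j vIN) :=
      Finset.mem_filter.2 ⟨(G.mem_neighborFinset _ _).2 ha.symm, h⟩
    have hc : (((G.neighborFinset vIN).filter (fun j => 0 < J j vIN)).card : ℝ) = 0 := by
      rw [hQcard vIN, hin_vIN]
    have : ((G.neighborFinset vIN).filter (fun j => 0 < J j vIN)).card = 0 := by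
      exact_mod_cast hc
    rw [Finset.card_eq_zero] at this
    rw [this] at hA
    exact absurd hA (Finset.notMem_empty a)
  -- construction of the unit-current walk from any vertex to vOUT
  have hwalk : ∀ n : ℕ, ∀ v : V, (Finset.univ.filter (fun w => φ w < φ v)).card ≤ n →
      ∃ p : G.Walk v vOUT, ∀ d ∈ p.darts, J d.fst d.snd = 1 := by
    intro n
    induction n with
    | zero =>
      intro v hv
      by_cases hv' : v = vOUT
      · subst hv'
        exact ⟨Walk.nil, by simp⟩
      · exfalso
        have hadj := hnxt_adj v hv'
        have h1 := hnxt_one v hv'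
        have hdec := hφdec v (nxt v) hadj (by rw [h1]; norm_num)
        have hmem : nxt v ∈ Finset.univ.filter (fun w => φ w < φ v) := by
          simp [hdec]
        have := Finset.card_pos.2 ⟨_, hmem⟩
        omega
    | succ n ih =>
      intro v hv
      by_cases hv' : v = vOUT
      · subst hv'
        exact ⟨Walk.nil, by simp⟩
      · have hadj := hnxt_adj v hv'
        have h1 := hnxt_one v hv'
        have hdec := hφdec v (nxt v) hadj (by rw [h1]; norm_num)
        have hcard : (Finset.univ.filter (fun w => φ w < φ (nxt v))).card ≤ n := by
          have hsub : Finset.univ.filter (fun w => φ w < φ (nxt v)) ⊆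
              Finset.univ.filter (fun w => φ w < φ v) := by
            intro w hw
            simp only [Finset.mem_filter, Finset.mem_univ, true_and] at hw ⊢
            linarith
          have hss : (Finset.univ.filter (fun w => φ w < φ (nxt v))).card <
              (Finset.univ.filter (fun w => φ w < φ v)).card := by
            apply Finset.card_lt_card
            refine ⟨hsub, fun hsub' => ?_⟩
            have hmem : nxt v ∈ Finset.univ.filter (fun w => φ w < φ v) := by simp [hdec]
            have := hsub' hmem
            simp only [Finset.mem_filter, Finset.mem_univ, true_and] at this
            exact lt_irrefl _ this
          omega
        obtain ⟨p, hp⟩ := ih (nxt v) hcard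
        refine ⟨Walk.cons hadj p, ?_⟩
        intro d hd
        rw [Walk.darts_cons, List.mem_cons] at hd
        rcases hd with rfl | hd
        · exact h1
        · exact hp d hd
  -- along a unit-current walk the potential is bounded by its value at the start
  have hbound : ∀ (a b : V) (p : G.Walk a b), (∀ d ∈ p.darts, J d.fst d.snd = 1) →
      ∀ u ∈ p.support, φ u ≤ φ a := by
    intro a b p
    induction p with
    | nil =>
      intro _ u hu
      rw [Walk.support_nil, List.mem_singleton] at hu
      subst hu
      exact le_rfl
    | @cons x y z h q ih =>
      intro hp u hu
      rw [Walk.support_cons, List.mem_cons] at hu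
      rcases hu with rfl | hu
      · exact le_rfl
      · have h1 : J x y = 1 := hp ⟨(x, y), h⟩ (by rw [Walk.darts_cons]; exact List.mem_cons_self)
        have hle := ih (fun d hd => hp d (by rw [Walk.darts_cons]; exact List.mem_cons_of_mem _ hd)) u hu
        have hdec := hφdec x y h (by rw [h1]; norm_num)
        linarith
  -- a unit-current walk has no repeated vertices
  have hnodup : ∀ (a b : V) (p : G.Walk a b), (∀ d ∈ p.darts, J d.fst d.snd = 1) →
      p.support.Nodup := by
    intro a b p
    induction p with
    | nil => intro _; simp
    | @cons x y z h q ih =>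
      intro hp
      rw [Walk.support_cons, List.nodup_cons]
      have htail : ∀ d ∈ q.darts, J d.fst d.snd = 1 :=
        fun d hd => hp d (by rw [Walk.darts_cons]; exact List.mem_cons_of_mem _ hd)
      constructor
      · intro hmem
        have hle := hbound _ _ q htail _ hmem
        have h1 : J x y = 1 := hp ⟨(x, y), h⟩ (by rw [Walk.darts_cons]; exact List.mem_cons_self)
        have hdec := hφdec x y h (by rw [h1]; norm_num)
        linarith
      · exact ih htail
  -- darts from interior support vertices
  have hfst : ∀ (a b : V) (p : G.Walk a b) (u : V), u ∈ p.support → u ≠ b →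
      ∃ d ∈ p.darts, d.fst = u := by
    intro a b p
    induction p with
    | nil =>
      intro u hu hub
      rw [Walk.support_nil, List.mem_singleton] at hu
      exact absurd hu hub
    | @cons x y z h q ih =>
      intro u hu hub
      rw [Walk.support_cons, List.mem_cons] at hu
      rcases hu with rfl | hu
      · exact ⟨⟨(u, y), h⟩, by rw [Walk.darts_cons]; exact List.mem_cons_self, rfl⟩
      · obtain ⟨d, hd, hdu⟩ := ih u hu hub
        exact ⟨d, by rw [Walk.darts_cons]; exact List.mem_cons_of_mem _ hd, hdu⟩
  have hsnd : ∀ (a b : V) (p : G.Walk a b) (u : V), u ∈ p.support → u ≠ a →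
      ∃ d ∈ p.darts, d.snd = u := by
    intro a b p
    induction p with
    | nil =>
      intro u hu hua
      rw [Walk.support_nil, List.mem_singleton] at hu
      exact absurd hu hua
    | @cons x y z h q ih =>
      intro u hu hua
      rw [Walk.support_cons, List.mem_cons] at hu
      rcases hu with rfl | hu
      · exact absurd rfl hua
      · by_cases huy : u = y
        · exact ⟨⟨(x, y), h⟩, by rw [Walk.darts_cons]; exact List.mem_cons_self, huy.symm⟩
        · obtain ⟨d, hd, hdu⟩ := ih u hu huy
          exact ⟨d, by rw [Walk.darts_cons]; exact List.mem_cons_of_mem _ hd, hdu⟩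
  -- the main walk
  obtain ⟨p₀, hp₀⟩ := hwalk (Fintype.card V) vIN (Finset.card_le_univ _)
  -- every vertex carrying a unit-current walk to vOUT lies on p₀
  have hcomplete : ∀ (w b : V) (q : G.Walk w b), (∀ d ∈ q.darts, J d.fst d.snd = 1) →
      b ∈ p₀.support → w ∈ p₀.support := by
    intro w b q
    induction q with
    | nil => exact fun _ h => h
    | @cons x y z h q ih =>
      intro hq hz
      have htail : ∀ d ∈ q.darts, J d.fst d.snd = 1 :=
        fun d hd => hq d (by rw [Walk.darts_cons]; exact List.mem_cons_of_mem _ hd)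
      have hy : y ∈ p₀.support := ih htail hz
      have h1 : J x y = 1 := hq ⟨(x, y), h⟩ (by rw [Walk.darts_cons]; exact List.mem_cons_self)
      by_cases hyIN : y = vIN
      · exfalso
        subst hyIN
        have := hno_pred_vIN x h
        linarith
      · obtain ⟨d, hd, hdy⟩ := hsnd _ _ p₀ y hy hyIN
        have hJd : J d.fst y = 1 := by rw [← hdy]; exact hp₀ d hd
        have hdadj : G.Adj d.fst y := by rw [← hdy]; exact d.adj
        have hx : x = d.fst := huniq_pred y x d.fst h hdadj (by rw [h1]; norm_num)
          (by rw [hJd]; norm_num)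
        rw [hx]
        exact Walk.dart_fst_mem_support_of_mem_darts p₀ hd
  have hmem_all : ∀ w : V, w ∈ p₀.support := by
    intro w
    obtain ⟨q, hq⟩ := hwalk (Fintype.card V) w (Finset.card_le_univ _)
    exact hcomplete w vOUT q hq p₀.end_mem_support
  have hham : p₀.IsHamiltonian := fun a =>
    List.count_eq_one_of_mem (hnodup _ _ p₀ hp₀) (hmem_all a)
  -- edge characterization
  have claim : ∀ x y : V, G.Adj x y → 0 < J x y → s(x, y) ∈ p₀.edges := by
    intro x y hxy hpos
    have hxOUT : x ≠ vOUT := by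
      rintro rfl
      exact absurd hpos (not_lt.2 (hout0 y hxy))
    obtain ⟨d, hd, hdx⟩ := hfst _ _ p₀ x (hmem_all x) hxOUT
    have h1 : J x d.snd = 1 := by rw [← hdx]; exact hp₀ d hd
    have hdadj : G.Adj x d.snd := by rw [← hdx]; exact d.adj
    have hy : y = nxt x := hnxt_uniq x hxOUT y hxy hpos
    have hds : d.snd = nxt x := hnxt_uniq x hxOUT d.snd hdadj (by rw [h1]; norm_num)
    have hedge : d.edge = s(x, y) := by
      rw [SimpleGraph.dart_edge_eq_mk'_iff']
      exact Or.inl ⟨hdx, by rw [hds, hy]⟩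
    rw [← hedge]
    exact List.mem_map_of_mem (f := Dart.edge) hd
  refine ⟨p₀, hham, ?_⟩
  intro i j hadj
  constructor
  · intro hJne
    rcases lt_or_gt_of_ne hJne with hneg | hpos
    · have : 0 < J j i := by rw [hanti i j]; linarith
      have := claim j i hadj.symm this
      rwa [Sym2.eq_swap] at this
    · exact claim i j hadj hpos
  · intro hmem h0
    rw [Walk.edges, List.mem_map] at hmem
    obtain ⟨d, hd, hde⟩ := hmem
    have h1 := hp₀ d hd
    rw [SimpleGraph.dart_edge_eq_mk'_iff'] at hde
    rcases hde with ⟨hdf, hds⟩ | ⟨hdf, hds⟩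
    · rw [hdf, hds] at h1
      rw [h0] at h1
      norm_num at h1
    · rw [hdf, hds] at h1
      rw [hanti i j, h0] at h1
      norm_num at h1
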